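/- Let P be an origin-symmetric convex polytope in ℝ^d with at most (4d)/3 − (1 + √(8d+9))/6 pairs of opposite facets, and let X be the d-dimensional normed space whose unit ball is P. Then e(X) ≥ d + 1. -/

import Mathlib

open Finset Matrix Pointwise


lemma select_aux {Q : Type} [AddCommGroup Q] [Module ℝ Q] [FiniteDimensional ℝ Q]
    {n : ℕ} (q : Fin n → Q) (I : Finset (Fin n)) :
    ∃ D : Finset (Fin n), D ⊆ I ∧ D.card ≤ Module.finrank ℝ Q ∧
      ∀ i ∈ I, ∃ c : Fin n → ℝ, (∀ j, |c j| ≤ 1) ∧ q i = ∑ j ∈ D, c j • q j := by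
  classical
  rcases I.eq_empty_or_nonempty with rfl | hI
  · exact ⟨∅, by simp, by simp, by simp⟩
  set W : Submodule ℝ Q := Submodule.span ℝ (q '' ↑I) with hW
  set r := Module.finrank ℝ W with hr
  have hrQ : r ≤ Module.finrank ℝ Q := Submodule.finrank_le W
  let b : Module.Basis (Fin r) ℝ W := Module.finBasis ℝ W
  haveI : Nonempty {i // i ∈ I} := ⟨⟨hI.choose, hI.choose_spec⟩⟩
  let qw : {i // i ∈ I} → W := fun i => ⟨q i, Submodule.subset_span ⟨i, i.2, rfl⟩⟩
  let v : {i // i ∈ I} → (Fin r → ℝ) := fun i => b.equivFun (qw i)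
  have hspanw : Submodule.span ℝ (Set.range qw) = ⊤ := by
    apply Submodule.map_injective_of_injective W.injective_subtype
    rw [Submodule.map_span, Submodule.map_top, Submodule.range_subtype]
    have : W.subtype '' Set.range qw = q '' ↑I := by
      ext x
      constructor
      · rintro ⟨y, ⟨i, rfl⟩, rfl⟩; exact ⟨i, i.2, rfl⟩
      · rintro ⟨i, hi, rfl⟩; exact ⟨qw ⟨i, hi⟩, ⟨⟨i, hi⟩, rfl⟩, rfl⟩
    rw [this, hW]
  have hspanv : Submodule.span ℝ (Set.range v) = ⊤ := by
    have hv : Set.range v = b.equivFun.toLinearMap '' Set.range qw := by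
      ext x
      constructor
      · rintro ⟨i, rfl⟩; exact ⟨qw i, ⟨i, rfl⟩, rfl⟩
      · rintro ⟨y, ⟨i, rfl⟩, rfl⟩; exact ⟨i, rfl⟩
    rw [hv, ← Submodule.map_span, hspanw, Submodule.map_top,
      LinearMap.range_eq_top]
    exact b.equivFun.surjective
  obtain ⟨B, hBsub, hBspan, hBind⟩ := exists_linearIndependent ℝ (Set.range v)
  rw [hspanv] at hBspan
  have hBfin : B.Finite := (Set.finite_range v).subset hBsub
  haveI := hBfin.fintype
  let bB : Module.Basis B ℝ (Fin r → ℝ) := Module.Basis.mk hBind (by rw [Subtype.range_coe]; exact hBspan.ge)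
  have hcard : Fintype.card B = r := by
    have h1 := Module.finrank_eq_card_basis bB
    rw [Module.finrank_fin_fun] at h1
    omega
  let e0 : Fin r ≃ B := (Fintype.equivFinOfCardEq hcard).symm
  have hpre : ∀ j : Fin r, ∃ i, v i = (e0 j : Fin r → ℝ) := fun j => hBsub (e0 j).2
  let σ₀ : Fin r → {i // i ∈ I} := fun j => (hpre j).choose
  have hσ₀ : ∀ j, v (σ₀ j) = (e0 j : Fin r → ℝ) := fun j => (hpre j).choose_spec
  let Mat : (Fin r → {i // i ∈ I}) → Matrix (Fin r) (Fin r) ℝ :=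
    fun σ => Matrix.of fun p j => v (σ j) p
  have hdet0 : (Mat σ₀).det ≠ 0 := by
    have hind : LinearIndependent ℝ (fun j : Fin r => (Mat σ₀).transpose j) := by
      have : (fun j : Fin r => (Mat σ₀).transpose j) = (fun x : B => (x : Fin r → ℝ)) ∘ e0 := by
        funext j; ext p; exact congrFun (hσ₀ j) p
      rw [this]
      exact hBind.comp e0 e0.injective
    have := Matrix.linearIndependent_cols_iff_isUnit.mp hind
    have := (Matrix.isUnit_iff_isUnit_det _).mp this
    exact this.ne_zero
  obtain ⟨σ, -, hσmax⟩ := Finset.exists_max_image Finset.univ (fun σ => |(Mat σ).det|)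
    Finset.univ_nonempty
  have hdet : (Mat σ).det ≠ 0 := by
    intro h
    have h2 := hσmax σ₀ (Finset.mem_univ _)
    rw [h, abs_zero] at h2
    exact hdet0 (abs_eq_zero.mp (le_antisymm h2 (abs_nonneg _)))
  have hσinj : Function.Injective σ := by
    intro j1 j2 h12
    by_contra hne
    exact hdet (Matrix.det_zero_of_column_eq hne (fun k => by simp [Mat, h12]))
  refine ⟨Finset.image (fun j => (σ j : Fin n)) Finset.univ, ?_, ?_, ?_⟩
  · intro p hp
    obtain ⟨j, -, rfl⟩ := Finset.mem_image.mp hp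
    exact (σ j).2
  · calc (Finset.image (fun j => (σ j : Fin n)) Finset.univ).card
        ≤ Finset.univ.card := Finset.card_image_le
      _ = r := by simp
      _ ≤ Module.finrank ℝ Q := hrQ
  · intro i hi
    set w : Fin r → ℝ := v ⟨i, hi⟩ with hwdef
    set c0 : Fin r → ℝ := ((Mat σ).det)⁻¹ • Matrix.cramer (Mat σ) w with hc0def
    have hsolve : (Mat σ) *ᵥ c0 = w := by
      rw [hc0def, Matrix.mulVec_smul, Matrix.mulVec_cramer, smul_smul,
        inv_mul_cancel₀ hdet, one_smul]
    have hc0 : ∀ j, |c0 j| ≤ 1 := by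
      intro j
      have hupdate : (Mat σ).updateCol j w = Mat (Function.update σ j ⟨i, hi⟩) := by
        ext p j'
        rw [Matrix.updateCol_apply]
        by_cases h : j' = j
        · subst h; simp [Mat, Function.update_self, hwdef]
        · simp [Mat, Function.update_of_ne h, h]
      have hle : |((Mat σ).updateCol j w).det| ≤ |(Mat σ).det| := by
        rw [hupdate]; exact hσmax _ (Finset.mem_univ _)
      have : c0 j = ((Mat σ).det)⁻¹ * ((Mat σ).updateCol j w).det := by
        rw [hc0def]; simp [Matrix.cramer_apply, smul_eq_mul]
      rw [this, abs_mul, abs_inv]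
      calc |(Mat σ).det|⁻¹ * |((Mat σ).updateCol j w).det|
          ≤ |(Mat σ).det|⁻¹ * |(Mat σ).det| := by
            apply mul_le_mul_of_nonneg_left hle (inv_nonneg.mpr (abs_nonneg _))
        _ = 1 := inv_mul_cancel₀ (abs_ne_zero.mpr hdet)
    have hqi : qw ⟨i, hi⟩ = ∑ j : Fin r, c0 j • qw (σ j) := by
      apply b.equivFun.injective
      rw [map_sum]
      funext p
      have hrhs : (∑ j : Fin r, b.equivFun (c0 j • qw (σ j))) p
          = ∑ j : Fin r, c0 j * v (σ j) p := by
        rw [Finset.sum_apply]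
        congr 1; funext j
        rw [_root_.map_smul]; simp only [v, Pi.smul_apply, smul_eq_mul]
      rw [hrhs]
      calc b.equivFun (qw ⟨i, hi⟩) p = w p := rfl
        _ = (Mat σ *ᵥ c0) p := (congrFun hsolve p).symm
        _ = ∑ j : Fin r, c0 j * v (σ j) p := by
            rw [show (Mat σ *ᵥ c0) p = ∑ j : Fin r, Mat σ p j * c0 j from rfl]
            exact Finset.sum_congr rfl fun j _ => mul_comm _ _
    have hqi' : q i = ∑ j : Fin r, c0 j • q (σ j) := by
      have := congrArg (Subtype.val) hqi
      simpa using this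
    refine ⟨fun p => if h : ∃ j, (σ j : Fin n) = p then c0 h.choose else 0, ?_, ?_⟩
    · intro p
      by_cases h : ∃ j, (σ j : Fin n) = p
      · simp only [dif_pos h]; exact hc0 _
      · simp only [dif_neg h, abs_zero]; exact zero_le_one
    · rw [hqi']
      have hginj : ∀ x ∈ Finset.univ, ∀ y ∈ Finset.univ,
          (fun j => (σ j : Fin n)) x = (fun j => (σ j : Fin n)) y → x = y := by
        intro x _ y _ hxy
        exact hσinj (Subtype.ext hxy)
      rw [Finset.sum_image hginj]
      congr 1; funext j
      have h : ∃ j', (σ j' : Fin n) = (σ j : Fin n) := ⟨j, rfl⟩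
      simp only [dif_pos h]
      have : h.choose = j := hσinj (Subtype.ext h.choose_spec)
      rw [this]

lemma gauge_eval {d f : ℕ} (a : Fin f → Fin d → ℝ) (z : Fin d → ℝ)
    (h1 : ∀ i, |∑ j, a i j * z j| ≤ 2) (h2 : ∃ i, |∑ j, a i j * z j| = 2) :
    gauge {x : Fin d → ℝ | ∀ i : Fin f, |∑ j, a i j * x j| ≤ 1} z = 2 := by
  have hset : {r : ℝ | 0 < r ∧ z ∈ r • {x : Fin d → ℝ | ∀ i : Fin f, |∑ j, a i j * x j| ≤ 1}}
      = Set.Ici 2 := by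
    ext r
    simp only [Set.mem_setOf_eq, Set.mem_Ici]
    constructor
    · rintro ⟨hr, hz⟩
      obtain ⟨i, hi⟩ := h2
      rw [Set.mem_smul_set] at hz
      obtain ⟨y, hy, hyz⟩ := hz
      have hzy : ∑ j, a i j * z j = r * ∑ j, a i j * y j := by
        rw [← hyz, Finset.mul_sum]
        exact Finset.sum_congr rfl fun j _ => by simp [smul_eq_mul]; ring
      rw [hzy, abs_mul, abs_of_pos hr] at hi
      have hyi := hy i
      nlinarith [abs_nonneg (∑ j, a i j * y j)]
    · intro hr
      have hr0 : (0:ℝ) < r := lt_of_lt_of_le two_pos hr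
      refine ⟨hr0, ?_⟩
      rw [Set.mem_smul_set]
      refine ⟨r⁻¹ • z, ?_, ?_⟩
      · intro i
        have hzy : ∑ j, a i j * (r⁻¹ • z) j = r⁻¹ * ∑ j, a i j * z j := by
          rw [Finset.mul_sum]
          exact Finset.sum_congr rfl fun j _ => by simp [smul_eq_mul]; ring
        rw [hzy, abs_mul, abs_inv, abs_of_pos hr0]
        have h1i := h1 i
        calc r⁻¹ * |∑ j, a i j * z j| ≤ r⁻¹ * r := by
              apply mul_le_mul_of_nonneg_left _ (inv_nonneg.mpr hr0.le)
              linarith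
          _ = 1 := inv_mul_cancel₀ hr0.ne'
      · rw [smul_smul, mul_inv_cancel₀ hr0.ne', one_smul]
  rw [gauge, hset, csInf_Ici]

lemma count_le2 {α : Type*} [DecidableEq α] (M : Finset α) :
    (Finset.filter (fun s => s.card ≤ 2) M.powerset).card
      = 1 + M.card + M.card.choose 2 := by
  classical
  have hdecomp : Finset.filter (fun s => s.card ≤ 2) M.powerset
      = (Finset.powersetCard 0 M ∪ Finset.powersetCard 1 M) ∪ Finset.powersetCard 2 M := by
    ext s
    simp only [Finset.mem_filter, Finset.mem_powerset, Finset.mem_union,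
      Finset.mem_powersetCard]
    by_cases h : s ⊆ M
    · simp only [h, true_and]; omega
    · simp [h]
  rw [hdecomp, Finset.card_union_of_disjoint, Finset.card_union_of_disjoint]
  · rw [Finset.card_powersetCard, Finset.card_powersetCard, Finset.card_powersetCard]
    simp
  · rw [Finset.disjoint_left]
    intro s hs0 hs1
    rw [Finset.mem_powersetCard] at hs0 hs1
    omega
  · rw [Finset.disjoint_left]
    intro s hs0 hs1
    rw [Finset.mem_union] at hs0
    rw [Finset.mem_powersetCard] at hs1
    rcases hs0 with h | h <;> rw [Finset.mem_powersetCard] at h <;> omega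

theorem stmt15 (d f : ℕ) (a : Fin f → Fin d → ℝ)
    (hspan : Submodule.span ℝ (Set.range a) = ⊤)
    (P : Set (Fin d → ℝ))
    (hP : P = {x | ∀ i : Fin f, |∑ j, a i j * x j| ≤ 1})
    (hf : (f : ℝ) ≤ 4 * d / 3 - (1 + Real.sqrt (8 * d + 9)) / 6) :
    ∃ S : Finset (Fin d → ℝ),
      (∃ c : ℝ, 0 < c ∧ ∀ x ∈ S, ∀ y ∈ S, x ≠ y → gauge P (x - y) = c) ∧
      d + 1 ≤ S.card := by
  classical
  subst hP
  let Amap : (Fin d → ℝ) →ₗ[ℝ] (Fin f → ℝ) := Matrix.mulVecLin (Matrix.of a)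
  have hAx : ∀ (x : Fin d → ℝ) (i : Fin f), Amap x i = ∑ j, a i j * x j := fun x i => rfl
  have hinj : Function.Injective Amap := by
    rw [← LinearMap.ker_eq_bot, Submodule.eq_bot_iff]
    intro x hx
    rw [LinearMap.mem_ker] at hx
    let φ : (Fin d → ℝ) →ₗ[ℝ] ℝ :=
      { toFun := fun y => ∑ j, y j * x j
        map_add' := fun y z => by simp [add_mul, Finset.sum_add_distrib]
        map_smul' := fun c y => by simp [Finset.mul_sum, mul_assoc] }
    have hker : Submodule.span ℝ (Set.range a) ≤ LinearMap.ker φ := by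
      rw [Submodule.span_le]
      rintro y ⟨i, rfl⟩
      rw [SetLike.mem_coe, LinearMap.mem_ker]
      have h := congrFun hx i
      rw [hAx] at h
      simpa [φ] using h
    rw [hspan, top_le_iff] at hker
    have hφx : φ x = 0 := by rw [← LinearMap.mem_ker, hker]; trivial
    have hsum : ∑ j, x j * x j = 0 := hφx
    funext j
    have := (Finset.sum_eq_zero_iff_of_nonneg
      (fun j _ => mul_self_nonneg (x j))).mp hsum j (Finset.mem_univ j)
    simpa using mul_self_eq_zero.mp this
  let V : Submodule ℝ (Fin f → ℝ) := LinearMap.range Amap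
  have hVmem : ∀ y, y ∈ V ↔ ∃ z, Amap z = y := fun y => LinearMap.mem_range
  let Q := (Fin f → ℝ) ⧸ V
  let π : (Fin f → ℝ) →ₗ[ℝ] Q := V.mkQ
  let e : Fin f → (Fin f → ℝ) := fun i => Pi.single i 1
  let q : Fin f → Q := fun i => π (e i)
  have hq : ∀ i, q i = π (e i) := fun i => rfl
  have hkd : Module.finrank ℝ Q + d = f := by
    have h1 : Module.finrank ℝ V = d := by
      have := LinearMap.finrank_range_of_inj hinj
      rw [Module.finrank_fin_fun] at this
      exact this
    have h2 := Submodule.finrank_quotient_add_finrank V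
    rw [h1, Module.finrank_fin_fun] at h2
    exact h2
  obtain ⟨D1, hD1I, hD1c, hc1⟩ := select_aux q Finset.univ
  obtain ⟨D2, hD2I, hD2c, hc2⟩ := select_aux q (Finset.univ \ D1)
  obtain ⟨D3, hD3I, hD3c, hc3⟩ := select_aux q ((Finset.univ \ D1) \ D2)
  obtain ⟨D4, hD4I, hD4c, hc4⟩ := select_aux q (((Finset.univ \ D1) \ D2) \ D3)
  set M : Finset (Fin f) := ((((Finset.univ : Finset (Fin f)) \ D1) \ D2) \ D3) \ D4 with hM
  have hMD : ∀ p ∈ M, p ∉ D1 ∧ p ∉ D2 ∧ p ∉ D3 ∧ p ∉ D4 := by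
    intro p hp
    rw [hM] at hp
    simp only [Finset.mem_sdiff] at hp
    tauto
  have hD21 : ∀ p ∈ D2, p ∉ D1 := by
    intro p hp
    have := hD2I hp
    simp only [Finset.mem_sdiff] at this
    tauto
  have hD31 : ∀ p ∈ D3, p ∉ D1 ∧ p ∉ D2 := by
    intro p hp
    have := hD3I hp
    simp only [Finset.mem_sdiff] at this
    tauto
  have hD41 : ∀ p ∈ D4, p ∉ D1 ∧ p ∉ D2 ∧ p ∉ D3 := by
    intro p hp
    have := hD4I hp
    simp only [Finset.mem_sdiff] at this
    tauto
  have hc1' : ∀ i, ∃ c : Fin f → ℝ, (∀ j, |c j| ≤ 1) ∧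
      (i ∈ M → q i = ∑ j ∈ D1, c j • q j) := by
    intro i
    obtain ⟨c, h1, h2⟩ := hc1 i (Finset.mem_univ i)
    exact ⟨c, h1, fun _ => h2⟩
  have hc2' : ∀ i, ∃ c : Fin f → ℝ, (∀ j, |c j| ≤ 1) ∧
      (i ∈ M → q i = ∑ j ∈ D2, c j • q j) := by
    intro i
    by_cases hi : i ∈ M
    · have hiI : i ∈ Finset.univ \ D1 := by
        rw [hM] at hi; simp only [Finset.mem_sdiff] at hi ⊢; tauto
      obtain ⟨c, h1, h2⟩ := hc2 i hiI
      exact ⟨c, h1, fun _ => h2⟩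
    · exact ⟨0, by simp, fun h => absurd h hi⟩
  have hc3' : ∀ i, ∃ c : Fin f → ℝ, (∀ j, |c j| ≤ 1) ∧
      (i ∈ M → q i = ∑ j ∈ D3, c j • q j) := by
    intro i
    by_cases hi : i ∈ M
    · have hiI : i ∈ (Finset.univ \ D1) \ D2 := by
        rw [hM] at hi; simp only [Finset.mem_sdiff] at hi ⊢; tauto
      obtain ⟨c, h1, h2⟩ := hc3 i hiI
      exact ⟨c, h1, fun _ => h2⟩
    · exact ⟨0, by simp, fun h => absurd h hi⟩
  have hc4' : ∀ i, ∃ c : Fin f → ℝ, (∀ j, |c j| ≤ 1) ∧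
      (i ∈ M → q i = ∑ j ∈ D4, c j • q j) := by
    intro i
    by_cases hi : i ∈ M
    · have hiI : i ∈ ((Finset.univ \ D1) \ D2) \ D3 := by
        rw [hM] at hi; simp only [Finset.mem_sdiff] at hi ⊢; tauto
      obtain ⟨c, h1, h2⟩ := hc4 i hiI
      exact ⟨c, h1, fun _ => h2⟩
    · exact ⟨0, by simp, fun h => absurd h hi⟩
  choose c1 hc1abs hc1eq using hc1'
  choose c2 hc2abs hc2eq using hc2'
  choose c3 hc3abs hc3eq using hc3'
  choose c4 hc4abs hc4eq using hc4'
  let AA : Fin f → (Fin f → ℝ) := fun i =>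
    (2:ℝ) • e i - ∑ j ∈ D1, c1 i j • e j - ∑ j ∈ D2, c2 i j • e j
  let BB : Fin f → (Fin f → ℝ) := fun i =>
    (2:ℝ) • e i - ∑ j ∈ D3, c3 i j • e j - ∑ j ∈ D4, c4 i j • e j
  have hsum_apply : ∀ (c : Fin f → ℝ) (D : Finset (Fin f)) (p : Fin f),
      (∑ j ∈ D, c j • e j) p = if p ∈ D then c p else 0 := by
    intro c D p
    rw [Finset.sum_apply]
    have hterm : ∀ j ∈ D, (c j • e j) p = if p = j then c j else 0 := by
      intro j _
      simp [e, Pi.single_apply]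
    rw [Finset.sum_congr rfl hterm, Finset.sum_ite_eq D p c]
  have hAAp : ∀ i p, AA i p = (if p = i then 2 else 0)
      - (if p ∈ D1 then c1 i p else 0) - (if p ∈ D2 then c2 i p else 0) := by
    intro i p
    show ((2:ℝ) • e i) p - (∑ j ∈ D1, c1 i j • e j) p - (∑ j ∈ D2, c2 i j • e j) p = _
    rw [hsum_apply (c1 i) D1 p, hsum_apply (c2 i) D2 p]
    congr 1
    congr 1
    simp [e, Pi.single_apply]
  have hBBp : ∀ i p, BB i p = (if p = i then 2 else 0)
      - (if p ∈ D3 then c3 i p else 0) - (if p ∈ D4 then c4 i p else 0) := by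
    intro i p
    show ((2:ℝ) • e i) p - (∑ j ∈ D3, c3 i j • e j) p - (∑ j ∈ D4, c4 i j • e j) p = _
    rw [hsum_apply (c3 i) D3 p, hsum_apply (c4 i) D4 p]
    congr 1
    congr 1
    simp [e, Pi.single_apply]
  have hmemV : ∀ x : Fin f → ℝ, π x = 0 → x ∈ V := by
    intro x hx
    exact (Submodule.Quotient.mk_eq_zero V).mp hx
  have hAAV : ∀ i ∈ M, AA i ∈ V := by
    intro i hi
    apply hmemV
    have hstep : π (AA i) = (2:ℝ) • q i - ∑ j ∈ D1, c1 i j • q j - ∑ j ∈ D2, c2 i j • q j := by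
      show π ((2:ℝ) • e i - ∑ j ∈ D1, c1 i j • e j - ∑ j ∈ D2, c2 i j • e j) = _
      rw [map_sub, map_sub, _root_.map_smul, map_sum, map_sum]
      simp only [_root_.map_smul]
      rfl
    rw [hstep, ← hc1eq i hi, ← hc2eq i hi, two_smul]
    abel
  have hBBV : ∀ i ∈ M, BB i ∈ V := by
    intro i hi
    apply hmemV
    have hstep : π (BB i) = (2:ℝ) • q i - ∑ j ∈ D3, c3 i j • q j - ∑ j ∈ D4, c4 i j • q j := by
      show π ((2:ℝ) • e i - ∑ j ∈ D3, c3 i j • e j - ∑ j ∈ D4, c4 i j • e j) = _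
      rw [map_sub, map_sub, _root_.map_smul, map_sum, map_sum]
      simp only [_root_.map_smul]
      rfl
    rw [hstep, ← hc3eq i hi, ← hc4eq i hi, two_smul]
    abel
  have hAAM : ∀ i, ∀ p ∈ M, AA i p = if p = i then 2 else 0 := by
    intro i p hp
    obtain ⟨h1, h2, -, -⟩ := hMD p hp
    rw [hAAp, if_neg h1, if_neg h2, sub_zero, sub_zero]
  have hBBM : ∀ i, ∀ p ∈ M, BB i p = if p = i then 2 else 0 := by
    intro i p hp
    obtain ⟨-, -, h3, h4⟩ := hMD p hp
    rw [hBBp, if_neg h3, if_neg h4, sub_zero, sub_zero]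
  have hAAb : ∀ i p, p ≠ i → |AA i p| ≤ 1 := by
    intro i p hne
    rw [hAAp, if_neg hne, zero_sub]
    by_cases h1 : p ∈ D1
    · have h2 : p ∉ D2 := fun h2 => hD21 p h2 h1
      rw [if_pos h1, if_neg h2, sub_zero, abs_neg]
      exact hc1abs i p
    · rw [if_neg h1, neg_zero, zero_sub, abs_neg]
      by_cases h2 : p ∈ D2
      · rw [if_pos h2]; exact hc2abs i p
      · rw [if_neg h2, abs_zero]; exact zero_le_one
  have hBBb : ∀ i p, p ≠ i → |BB i p| ≤ 1 := by
    intro i p hne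
    rw [hBBp, if_neg hne, zero_sub]
    by_cases h3 : p ∈ D3
    · have h4 : p ∉ D4 := fun h4 => (hD41 p h4).2.2 h3
      rw [if_pos h3, if_neg h4, sub_zero, abs_neg]
      exact hc3abs i p
    · rw [if_neg h3, neg_zero, zero_sub, abs_neg]
      by_cases h4 : p ∈ D4
      · rw [if_pos h4]; exact hc4abs i p
      · rw [if_neg h4, abs_zero]; exact zero_le_one
  have hAA0 : ∀ i p, p ≠ i → p ∉ D1 → p ∉ D2 → AA i p = 0 := by
    intro i p hne h1 h2
    rw [hAAp, if_neg hne, if_neg h1, if_neg h2]; ring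
  have hBB0 : ∀ i p, p ≠ i → p ∉ D3 → p ∉ D4 → BB i p = 0 := by
    intro i p hne h3 h4
    rw [hBBp, if_neg hne, if_neg h3, if_neg h4]; ring
  -- the points, indexed by small subsets of M
  let u : Finset (Fin f) → (Fin f → ℝ) := fun s =>
    if h2 : s.card = 2 then
      AA (s.min' (Finset.card_pos.mp (by omega))) + BB (s.max' (Finset.card_pos.mp (by omega)))
    else ∑ i ∈ s, AA i
  have hu : ∀ s : Finset (Fin f), s ⊆ M → s.card ≤ 2 →
      u s ∈ V ∧ (∀ p ∈ M, u s p = if p ∈ s then 2 else 0) ∧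
      (∀ p, p ∉ M → |u s p| ≤ 1) := by
    intro s hsM hs2
    by_cases h2 : s.card = 2
    · have hne : s.Nonempty := Finset.card_pos.mp (by omega)
      have hilt := Finset.min'_lt_max'_of_card s (by omega)
      set i1 := s.min' hne with hi1
      set i2 := s.max' hne with hi2
      have hne12 : i1 ≠ i2 := ne_of_lt hilt
      have hi1s : i1 ∈ s := Finset.min'_mem s hne
      have hi2s : i2 ∈ s := Finset.max'_mem s hne
      have hi1M : i1 ∈ M := hsM hi1s
      have hi2M : i2 ∈ M := hsM hi2s
      have hseq : ({i1, i2} : Finset (Fin f)) = s := by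
        apply Finset.eq_of_subset_of_card_le
        · intro p hp
          simp only [Finset.mem_insert, Finset.mem_singleton] at hp
          rcases hp with rfl | rfl
          · exact hi1s
          · exact hi2s
        · rw [h2, Finset.card_insert_of_notMem (by simp [hne12]), Finset.card_singleton]
      have hus : u s = AA i1 + BB i2 := by
        show dite _ _ _ = _
        rw [dif_pos h2]
      refine ⟨?_, ?_, ?_⟩
      · rw [hus]; exact V.add_mem (hAAV i1 hi1M) (hBBV i2 hi2M)
      · intro p hp
        rw [hus]
        show AA i1 p + BB i2 p = _
        rw [hAAM i1 p hp, hBBM i2 p hp, ← hseq]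
        by_cases hp1 : p = i1
        · subst hp1
          rw [if_pos rfl, if_neg hne12, if_pos (by simp)]
          norm_num
        · by_cases hp2 : p = i2
          · subst hp2
            rw [if_neg hp1, if_pos rfl, if_pos (by simp)]
            norm_num
          · rw [if_neg hp1, if_neg hp2, if_neg (by simp [hp1, hp2])]
            norm_num
      · intro p hp
        rw [hus]
        have hpi1 : p ≠ i1 := fun h => hp (h ▸ hi1M)
        have hpi2 : p ≠ i2 := fun h => hp (h ▸ hi2M)
        show |AA i1 p + BB i2 p| ≤ 1
        by_cases h34 : p ∈ D3 ∨ p ∈ D4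
        · have hA0 : AA i1 p = 0 := by
            apply hAA0 i1 p hpi1
            · rcases h34 with h | h
              · exact (hD31 p h).1
              · exact (hD41 p h).1
            · rcases h34 with h | h
              · exact (hD31 p h).2
              · exact (hD41 p h).2.1
          rw [hA0, zero_add]
          exact hBBb i2 p hpi2
        · push_neg at h34
          have hB0 : BB i2 p = 0 := hBB0 i2 p hpi2 h34.1 h34.2
          rw [hB0, add_zero]
          exact hAAb i1 p hpi1
    · have hus : u s = ∑ i ∈ s, AA i := by
        show dite _ _ _ = _
        rw [dif_neg h2]
      have hcard : s.card = 0 ∨ s.card = 1 := by omega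
      rcases hcard with h0 | h1cd
      · have hse : s = ∅ := Finset.card_eq_zero.mp h0
        subst hse
        rw [Finset.sum_empty] at hus
        refine ⟨?_, ?_, ?_⟩
        · rw [hus]; exact V.zero_mem
        · intro p hp; rw [hus]; simp
        · intro p hp; rw [hus]; simp
      · obtain ⟨i0, rfl⟩ := Finset.card_eq_one.mp h1cd
        rw [Finset.sum_singleton] at hus
        have hi0M : i0 ∈ M := hsM (Finset.mem_singleton_self i0)
        refine ⟨?_, ?_, ?_⟩
        · rw [hus]; exact hAAV i0 hi0M
        · intro p hp
          rw [hus, hAAM i0 p hp]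
          simp [Finset.mem_singleton]
        · intro p hp
          rw [hus]
          exact hAAb i0 p (fun h => hp (h ▸ hi0M))
  have hux : ∀ s : Finset (Fin f), ∃ z : Fin d → ℝ, (s ⊆ M ∧ s.card ≤ 2) → Amap z = u s := by
    intro s
    by_cases h : s ⊆ M ∧ s.card ≤ 2
    · have hmem := (hu s h.1 h.2).1
      rw [hVmem] at hmem
      obtain ⟨z, hz⟩ := hmem
      exact ⟨z, fun _ => hz⟩
    · exact ⟨0, fun hh => absurd hh h⟩
  choose x hx using hux
  set T : Finset (Finset (Fin f)) := Finset.filter (fun s => s.card ≤ 2) M.powerset with hT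
  have hTmem : ∀ s ∈ T, s ⊆ M ∧ s.card ≤ 2 := by
    intro s hs
    rw [hT, Finset.mem_filter, Finset.mem_powerset] at hs
    exact hs
  have hxinj : ∀ s1 ∈ T, ∀ s2 ∈ T, x s1 = x s2 → s1 = s2 := by
    intro s1 hs1 s2 hs2 hxx
    have h1 := hTmem s1 hs1
    have h2 := hTmem s2 hs2
    have huu : u s1 = u s2 := by
      rw [← hx s1 h1, ← hx s2 h2, hxx]
    ext p
    by_cases hpM : p ∈ M
    · have e1 := (hu s1 h1.1 h1.2).2.1 p hpM
      have e2 := (hu s2 h2.1 h2.2).2.1 p hpM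
      have e3 : (if p ∈ s1 then (2:ℝ) else 0) = (if p ∈ s2 then 2 else 0) := by
        rw [← e1, ← e2, huu]
      by_cases hp1 : p ∈ s1 <;> by_cases hp2 : p ∈ s2
      · exact iff_of_true hp1 hp2
      · rw [if_pos hp1, if_neg hp2] at e3; norm_num at e3
      · rw [if_neg hp1, if_pos hp2] at e3; norm_num at e3
      · exact iff_of_false hp1 hp2
    · exact iff_of_false (fun h => hpM (h1.1 h)) (fun h => hpM (h2.1 h))
  -- cardinality estimates
  have hcards : 4 * d ≤ M.card + 3 * f := by
    have f1 : ((Finset.univ : Finset (Fin f)) \ D1).card + D1.card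
        = ((Finset.univ : Finset (Fin f)) ∪ D1).card := Finset.card_sdiff_add_card _ _
    have f1' : ((Finset.univ : Finset (Fin f)) ∪ D1).card = f := by
      rw [Finset.union_eq_left.mpr (Finset.subset_univ D1), Finset.card_univ, Fintype.card_fin]
    have f2 : (((Finset.univ : Finset (Fin f)) \ D1) \ D2).card + D2.card
        = ((((Finset.univ : Finset (Fin f)) \ D1)) ∪ D2).card := Finset.card_sdiff_add_card _ _
    have f2' : ((Finset.univ : Finset (Fin f)) \ D1).card
        ≤ ((((Finset.univ : Finset (Fin f)) \ D1)) ∪ D2).card :=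
      Finset.card_le_card Finset.subset_union_left
    have f3 : ((((Finset.univ : Finset (Fin f)) \ D1) \ D2) \ D3).card + D3.card
        = (((((Finset.univ : Finset (Fin f)) \ D1) \ D2)) ∪ D3).card :=
      Finset.card_sdiff_add_card _ _
    have f3' : (((Finset.univ : Finset (Fin f)) \ D1) \ D2).card
        ≤ (((((Finset.univ : Finset (Fin f)) \ D1) \ D2)) ∪ D3).card :=
      Finset.card_le_card Finset.subset_union_left
    have f4 : M.card + D4.card
        = ((((((Finset.univ : Finset (Fin f)) \ D1) \ D2) \ D3)) ∪ D4).card := by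
      rw [hM]; exact Finset.card_sdiff_add_card _ _
    have f4' : ((((Finset.univ : Finset (Fin f)) \ D1) \ D2) \ D3).card
        ≤ ((((((Finset.univ : Finset (Fin f)) \ D1) \ D2) \ D3)) ∪ D4).card :=
      Finset.card_le_card Finset.subset_union_left
    omega
  have hsnn : (0:ℝ) ≤ Real.sqrt (8 * d + 9) := Real.sqrt_nonneg _
  have hs2 : Real.sqrt (8 * d + 9) ^ 2 = 8 * d + 9 := Real.sq_sqrt (by positivity)
  have hcR : (4:ℝ) * d ≤ (M.card : ℝ) + 3 * f := by exact_mod_cast hcards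
  have hmu : (1 + Real.sqrt (8 * d + 9)) / 2 ≤ (M.card : ℝ) := by linarith
  have hMnn : (0:ℝ) ≤ (M.card : ℝ) := Nat.cast_nonneg _
  have key : 2 * (d:ℝ) ≤ (M.card : ℝ) * (M.card : ℝ) + (M.card : ℝ) := by
    have hp : ((M.card:ℝ) - (1 + Real.sqrt (8*d+9))/2)
        * ((M.card:ℝ) + (3 + Real.sqrt (8*d+9))/2) ≥ 0 := by
      apply mul_nonneg
      · linarith
      · linarith
    nlinarith [hp, hsnn, hs2]
  have hd : d ≤ M.card + (M.card).choose 2 := by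
    have hr : (d:ℝ) ≤ (M.card : ℝ) + ((M.card).choose 2 : ℝ) := by
      rw [Nat.cast_choose_two]
      linarith
    exact_mod_cast hr
  refine ⟨T.image x, ⟨2, two_pos, ?_⟩, ?_⟩
  · intro xx hxx yy hyy hnexy
    obtain ⟨s1, hs1, rfl⟩ := Finset.mem_image.mp hxx
    obtain ⟨s2, hs2, rfl⟩ := Finset.mem_image.mp hyy
    have h1 := hTmem s1 hs1
    have h2 := hTmem s2 hs2
    have hs12 : s1 ≠ s2 := fun h => hnexy (by rw [h])
    have hmap : Amap (x s1 - x s2) = u s1 - u s2 := by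
      rw [map_sub, hx s1 h1, hx s2 h2]
    have hAz : ∀ i : Fin f, (∑ j, a i j * (x s1 - x s2) j) = u s1 i - u s2 i := by
      intro i
      calc ∑ j, a i j * (x s1 - x s2) j = Amap (x s1 - x s2) i := (hAx _ i).symm
        _ = (u s1 - u s2) i := congrFun hmap i
        _ = u s1 i - u s2 i := rfl
    apply gauge_eval
    · intro i
      rw [hAz i]
      by_cases hiM : i ∈ M
      · rw [(hu s1 h1.1 h1.2).2.1 i hiM, (hu s2 h2.1 h2.2).2.1 i hiM]
        split_ifs <;> norm_num
      · calc |u s1 i - u s2 i| ≤ |u s1 i| + |u s2 i| := abs_sub _ _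
          _ ≤ 1 + 1 := add_le_add ((hu s1 h1.1 h1.2).2.2 i hiM) ((hu s2 h2.1 h2.2).2.2 i hiM)
          _ = 2 := by norm_num
    · obtain ⟨p, hp⟩ := Finset.symmDiff_nonempty.mpr hs12
      rw [Finset.mem_symmDiff] at hp
      have hpM : p ∈ M := by
        rcases hp with ⟨h, -⟩ | ⟨h, -⟩
        · exact h1.1 h
        · exact h2.1 h
      refine ⟨p, ?_⟩
      rw [hAz p, (hu s1 h1.1 h1.2).2.1 p hpM, (hu s2 h2.1 h2.2).2.1 p hpM]
      rcases hp with ⟨hin, hout⟩ | ⟨hin, hout⟩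
      · rw [if_pos hin, if_neg hout]; norm_num
      · rw [if_neg hout, if_pos hin]; norm_num
  · have hcardim : (T.image x).card = T.card := by
      apply Finset.card_image_of_injOn
      intro s1 h1 s2 h2 heq
      exact hxinj s1 h1 s2 h2 heq
    have hTcard := count_le2 M
    rw [← hT] at hTcard
    rw [hcardim, hTcard]
    omega
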